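/- For every binary tree topology T with nodes numbered in inorder, and every assignment to each two-child node v of an interleaving M(v) of its left inner spine (size l_v) and right inner spine (size r_v), there exists a permutation A of {1,...,n} whose Cartesian tree is T and in which, for every such v, the relative order of the values at the nodes of the two inner spines of v agrees with M(v). -/

import Mathlib

inductive BT where
  | leaf : BT
  | node : BT → BT → BT
deriving DecidableEq

namespace BT

/-- Number of nodes. -/
def size : BT → ℕ
  | leaf => 0
  | node l r => l.size + r.size + 1

/-- Inorder list of node positions (paths from the root; `false` = left step). -/
def inList : BT → List (List Bool)
  | leaf => []
  | node l r => (l.inList).map (List.cons false) ++ [] :: (r.inList).map (List.cons true)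

/-- Preorder list of node positions. -/
def preList : BT → List (List Bool)
  | leaf => []
  | node l r => [] :: ((l.preList).map (List.cons false) ++ (r.preList).map (List.cons true))

/-- Subtree rooted at a given position, if the position is valid. -/
def subtree? : BT → List Bool → Option BT
  | t, [] => some t
  | leaf, _ :: _ => none
  | node l r, b :: p => if b then r.subtree? p else l.subtree? p

/-- Size of the left spine (maximal path following left children, top node included). -/
def Lspine : BT → ℕ
  | leaf => 0
  | node l _ => l.Lspine + 1

/-- Size of the right spine. -/
def Rspine : BT → ℕ
  | leaf => 0
  | node _ r => r.Rspine + 1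

/-- Size of the left inner spine of the root: right spine of the left child. -/
def lv : BT → ℕ
  | leaf => 0
  | node l _ => l.Rspine

/-- Size of the right inner spine of the root: left spine of the right child. -/
def rv : BT → ℕ
  | leaf => 0
  | node _ r => r.Lspine

/-- Sum of `f` over all (sub)trees rooted at nodes of the tree. -/
def sumNodes (f : BT → ℕ) : BT → ℕ
  | leaf => 0
  | node l r => f (node l r) + sumNodes f l + sumNodes f r

/-- Number of leaf nodes (nodes with no children). -/
def leaves : BT → ℕ
  | leaf => 0
  | node leaf leaf => 1
  | node l r => leaves l + leaves r

end BT

/-- Longest common prefix of two paths: the LCA of two positions in a binary tree. -/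
def lcp : List Bool → List Bool → List Bool
  | a :: p, b :: q => if a = b then a :: lcp p q else []
  | _, _ => []

/-- Index of the minimum element of a list (0 if empty). -/
def minIdx {α : Type*} [LinearOrder α] (l : List α) : ℕ :=
  match l.argmin id with
  | none => 0
  | some a => l.idxOf a

/-- Cartesian tree construction with fuel. -/
def cartesianAux {α : Type*} [LinearOrder α] : ℕ → List α → BT
  | 0, _ => .leaf
  | _ + 1, [] => .leaf
  | n + 1, l@(_ :: _) =>
      .node (cartesianAux n (l.take (minIdx l))) (cartesianAux n (l.drop (minIdx l + 1)))

/-- The Cartesian tree of a list: root at the position of the minimum,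
recursively built on the prefix before and the suffix after the minimum. -/
def cartesian {α : Type*} [LinearOrder α] (l : List α) : BT :=
  cartesianAux l.length l

/-- `k` is the position of the minimum of `A` on the range `[i, j]`. -/
def isArgmin {α : Type*} [LinearOrder α] {n : ℕ} (A : Fin n → α) (i j k : Fin n) : Prop :=
  i ≤ k ∧ k ≤ j ∧ ∀ m, i ≤ m → m ≤ j → A k ≤ A m

/-- `k` is the position of the second smallest element of `A` on the range `[i, j]`. -/
def isSecondMin {α : Type*} [LinearOrder α] {n : ℕ} (A : Fin n → α) (i j k : Fin n) : Prop :=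
  i ≤ k ∧ k ≤ j ∧
    ∃ m, isArgmin A i j m ∧ k ≠ m ∧ ∀ l, i ≤ l → l ≤ j → l ≠ m → A k ≤ A l

/-- The node with inorder number `i` in `t` has a left child. -/
def hasLeftChildAt (t : BT) (i : ℕ) : Prop :=
  ∃ (p : List Bool) (ll lr r : BT),
    t.inList[i]? = some p ∧ t.subtree? p = some (.node (.node ll lr) r)

/-- Index of the `k`-th (0-indexed) occurrence of `b` in `w` (`w.length` if none). -/
def nthIdx (w : List Bool) (b : Bool) (k : ℕ) : ℕ :=
  ((List.range w.length).filter fun i => w.getD i (!b) = b).getD k w.length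

/-- `M` assigns to each two-child node of `t` a valid merge word of its inner spines:
a word of length `l_v + r_v` with exactly `r_v` occurrences of `true`. -/
def validMerge (t : BT) (M : List Bool → List Bool) : Prop :=
  ∀ p l r, t.subtree? p = some (.node l r) → l ≠ .leaf → r ≠ .leaf →
    (M p).length = l.Rspine + r.Lspine ∧ (M p).count true = r.Lspine

/-- The array `A` realizes the extended Cartesian tree `(t, M)`: its Cartesian tree is `t`
and, at every two-child node, the relative order of the values on the two inner spines
agrees with the merge word (which lists, in increasing value order, `false` for an element
of the left inner spine and `true` for one of the right inner spine). -/
def realizes {α : Type*} [LinearOrder α] {n : ℕ} (A : Fin n → α) (t : BT)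
    (M : List Bool → List Bool) : Prop :=
  cartesian (List.ofFn A) = t ∧
  ∀ p l r, t.subtree? p = some (.node l r) → l ≠ .leaf → r ≠ .leaf →
    ∀ (k k' : ℕ), k < l.Rspine → k' < r.Lspine →
      ∀ x y : Fin n,
        t.inList[(x : ℕ)]? = some (p ++ false :: List.replicate k true) →
        t.inList[(y : ℕ)]? = some (p ++ true :: List.replicate k' false) →
        (A x < A y ↔ nthIdx (M p) false k < nthIdx (M p) true k')

section Helpers

open List

variable {α : Type*} {β : Type*} [LinearOrder α] [LinearOrder β]

lemma auxNil (n : ℕ) : cartesianAux (α := α) n [] = .leaf := by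
  cases n <;> rfl

lemma cart_nil : cartesian ([] : List α) = .leaf := rfl

omit [LinearOrder α] in
lemma indexOf_le_of_getElem [DecidableEq α] {L : List α} {i : ℕ} (hi : i < L.length) :
    L.idxOf (L[i]) ≤ i := by
  induction L generalizing i with
  | nil => simp at hi
  | cons x xs ih =>
    cases i with
    | zero => simp
    | succ i =>
      by_cases hx : x = xs[i]'(by simpa using hi)
      · rw [List.getElem_cons_succ, List.idxOf_cons_eq _ hx]; omega
      · simp only [List.getElem_cons_succ]
        rw [List.idxOf_cons_ne _ hx]
        exact Nat.succ_le_succ (ih (by simpa using hi))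

lemma minIdx_lt_length {L : List α} (h : L ≠ []) : minIdx L < L.length := by
  obtain ⟨a, ha⟩ : ∃ a, L.argmin id = some a := by
    cases h' : L.argmin id with
    | none => exact absurd (List.argmin_eq_none.mp h') h
    | some a => exact ⟨a, rfl⟩
  have hm : a ∈ L := List.argmin_mem ha
  simp only [minIdx, ha]
  exact List.idxOf_lt_length_iff.mpr hm

lemma minIdx_le {L : List α} (h : L ≠ []) {i : ℕ} (hi : i < L.length) :
    L[minIdx L]'(minIdx_lt_length h) ≤ L[i] := by
  obtain ⟨a, ha⟩ : ∃ a, L.argmin id = some a := by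
    cases h' : L.argmin id with
    | none => exact absurd (List.argmin_eq_none.mp h') h
    | some a => exact ⟨a, rfl⟩
  have hm : a ∈ L := List.argmin_mem ha
  have : minIdx L = L.idxOf a := by simp [minIdx, ha]
  have hg : L[minIdx L]'(minIdx_lt_length h) = a := by
    simp only [this]; exact List.getElem_idxOf _
  rw [hg]
  exact List.le_of_mem_argmin (List.getElem_mem _) ha

lemma minIdx_first {L : List α} (h : L ≠ []) {i : ℕ} (hi : i < minIdx L) :
    L[i]'(lt_trans hi (minIdx_lt_length h)) ≠ L[minIdx L]'(minIdx_lt_length h) := by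
  obtain ⟨a, ha⟩ : ∃ a, L.argmin id = some a := by
    cases h' : L.argmin id with
    | none => exact absurd (List.argmin_eq_none.mp h') h
    | some a => exact ⟨a, rfl⟩
  have hmi : minIdx L = L.idxOf a := by simp [minIdx, ha]
  have hg : L[minIdx L]'(minIdx_lt_length h) = a := by
    simp only [hmi]; exact List.getElem_idxOf _
  intro hEq
  have : L.idxOf a ≤ i := by
    have := indexOf_le_of_getElem (L := L) (lt_trans hi (minIdx_lt_length h))
    rwa [hEq, hg] at this
  omega

lemma minIdx_eq {L : List α} {k : ℕ} (hk : k < L.length)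
    (hle : ∀ i (hi : i < L.length), L[k] ≤ L[i])
    (hne : ∀ i (hi : i < k), L[i]'(lt_trans hi hk) ≠ L[k]) : minIdx L = k := by
  have h : L ≠ [] := by rintro rfl; simp at hk
  rcases lt_trichotomy (minIdx L) k with hlt | hEq | hgt
  · exact absurd (le_antisymm (minIdx_le h hk) (hle _ (minIdx_lt_length h)))
      (hne _ hlt)
  · exact hEq
  · exact absurd (le_antisymm (hle _ (minIdx_lt_length h)) (minIdx_le h hk))
      (minIdx_first h hgt)

lemma aux_congr : ∀ (n : ℕ) (L : List α) (m : ℕ), L.length ≤ n → L.length ≤ m →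
    cartesianAux n L = cartesianAux m L := by
  intro n
  induction n with
  | zero =>
    intro L m h _
    rw [List.length_eq_zero_iff.mp (Nat.le_zero.mp h)]
    simp [auxNil]
  | succ n ih =>
    intro L m hn hm
    cases L with
    | nil => simp [auxNil]
    | cons x xs =>
      cases m with
      | zero => simp at hm
      | succ m =>
        have hne : (x::xs : List α) ≠ [] := by simp
        have hmi := minIdx_lt_length hne
        simp only [List.length_cons] at hn hm hmi
        simp only [cartesianAux]
        have hlen : (x::xs : List α).length = xs.length + 1 := rfl
        congr 1
        · exact ih _ _ (by simp [List.length_take]; omega) (by simp [List.length_take]; omega)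
        · exact ih _ _ (by simp [List.length_drop]; omega) (by simp [List.length_drop]; omega)

lemma cart_unfold {L : List α} (h : L ≠ []) :
    cartesian L = .node (cartesian (L.take (minIdx L))) (cartesian (L.drop (minIdx L + 1))) := by
  cases L with
  | nil => exact absurd rfl h
  | cons x xs =>
    have hmi := minIdx_lt_length h
    simp only [List.length_cons] at hmi
    show cartesianAux (xs.length + 1) (x::xs) = _
    simp only [cartesianAux]
    unfold cartesian
    congr 1
    · exact aux_congr _ _ _ (by simp only [List.length_take, List.length_cons]; omega) le_rfl
    · exact aux_congr _ _ _ (by simp only [List.length_drop, List.length_cons]; omega) le_rfl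

lemma size_cart : ∀ (n : ℕ) (L : List α), L.length ≤ n → (cartesian L).size = L.length := by
  intro n
  induction n with
  | zero =>
    intro L h
    rw [List.length_eq_zero_iff.mp (Nat.le_zero.mp h)]
    rfl
  | succ n ih =>
    intro L hn
    cases L with
    | nil => rfl
    | cons x xs =>
      have hne : (x::xs : List α) ≠ [] := by simp
      have hmi := minIdx_lt_length hne
      simp only [List.length_cons] at hn hmi
      rw [cart_unfold hne]
      have h1 := ih ((x::xs).take (minIdx (x::xs))) (by simp [List.length_take]; omega)
      have h2 := ih ((x::xs).drop (minIdx (x::xs) + 1)) (by simp [List.length_drop]; omega)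
      simp only [BT.size, h1, h2, List.length_take, List.length_drop]
      simp at hn ⊢
      omega

lemma size_cart' (L : List α) : (cartesian L).size = L.length := size_cart _ _ le_rfl

end Helpers
section Helpers2

open List

variable {α : Type*} {β : Type*} [LinearOrder α] [LinearOrder β]

lemma cart_append (P Q : List α) (v : α) (h : ∀ x ∈ P ++ Q, v < x) :
    cartesian (P ++ v :: Q) = .node (cartesian P) (cartesian Q) := by
  have hPlen : P.length < (P ++ v :: Q).length := by simp
  have hv : (P ++ v :: Q)[P.length]'hPlen = v := by
    rw [List.getElem_append_right le_rfl]
    simp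
  have hm : minIdx (P ++ v :: Q) = P.length := by
    apply minIdx_eq hPlen
    · intro i hi
      rcases lt_trichotomy i P.length with hlt | hEq | hgt
      · have : (P ++ v :: Q)[i] = P[i]'hlt := List.getElem_append_left hlt
        rw [hv, this]
        exact le_of_lt (h _ (List.mem_append_left _ (List.getElem_mem _)))
      · subst hEq; rw [hv]
      · have h1 : P.length ≤ i := le_of_lt hgt
        have : (P ++ v :: Q)[i] = (v :: Q)[i - P.length]'(by simp at hi ⊢; omega) :=
          List.getElem_append_right h1
        rw [hv, this]
        have h2 : i - P.length ≠ 0 := by omega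
        rcases Nat.exists_eq_succ_of_ne_zero h2 with ⟨j, hj⟩
        have : (v :: Q)[i - P.length]'(by simp at hi ⊢; omega) = Q[j]'(by simp at hi ⊢; omega) := by
          simp [hj]
        rw [this]
        exact le_of_lt (h _ (List.mem_append_right _ (List.getElem_mem _)))
    · intro i hi
      have : (P ++ v :: Q)[i]'(lt_trans hi hPlen) = P[i]'hi := List.getElem_append_left hi
      rw [hv, this]
      exact ne_of_gt (h _ (List.mem_append_left _ (List.getElem_mem _)))
  have hne : P ++ v :: Q ≠ [] := by simp
  rw [cart_unfold hne, hm]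
  have ht : (P ++ v :: Q).take P.length = P := List.take_left
  have hd : (P ++ v :: Q).drop (P.length + 1) = Q := by
    have : P ++ v :: Q = (P ++ [v]) ++ Q := by simp
    rw [this, show P.length + 1 = (P ++ [v]).length by simp, List.drop_left]
  rw [ht, hd]

lemma cart_decomp {L : List α} {l r : BT} (h : cartesian L = .node l r) :
    ∃ P v Q, L = P ++ v :: Q ∧ P.length = l.size ∧ Q.length = r.size ∧
      cartesian P = l ∧ cartesian Q = r ∧ (∀ x ∈ L, v ≤ x) ∧ L.length = l.size + r.size + 1 := by
  have hne : L ≠ [] := by rintro rfl; simp [cart_nil] at h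
  have hmi := minIdx_lt_length hne
  rw [cart_unfold hne] at h
  injection h with h1 h2
  have hLsz : L.length = l.size + r.size + 1 := by
    have e1 : l.size = minIdx L := by rw [← h1, size_cart']; simp [List.length_take]; omega
    have e2 : r.size = L.length - minIdx L - 1 := by rw [← h2, size_cart']; simp; omega
    omega
  refine ⟨L.take (minIdx L), L[minIdx L]'hmi, L.drop (minIdx L + 1), ?_, ?_, ?_, h1, h2, ?_, hLsz⟩
  · conv_lhs => rw [← List.take_append_drop (minIdx L) L]
    rw [List.drop_eq_getElem_cons hmi]
  · rw [← h1, size_cart']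
  · rw [← h2, size_cart']
  · intro x hx
    rcases List.mem_iff_getElem.mp hx with ⟨i, hi, rfl⟩
    exact minIdx_le hne hi

lemma cart_congr : ∀ (n : ℕ) (L : List α) (L' : List β), L.length ≤ n →
    ∀ (hlen : L.length = L'.length),
    (∀ i j (hi : i < L.length) (hj : j < L.length),
      (L[i] < L[j] ↔ L'[i]'(hlen ▸ hi) < L'[j]'(hlen ▸ hj))) →
    cartesian L = cartesian L' := by
  intro n
  induction n with
  | zero =>
    intro L L' h hlen _
    have : L = [] := List.length_eq_zero_iff.mp (Nat.le_zero.mp h)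
    subst this
    have : L' = [] := List.length_eq_zero_iff.mp hlen.symm
    subst this
    rfl
  | succ n ih =>
    intro L L' hn hlen hpat
    rcases eq_or_ne L [] with rfl | hne
    · have : L' = [] := List.length_eq_zero_iff.mp hlen.symm
      subst this; rfl
    have hne' : L' ≠ [] := by
      intro hh; apply hne; apply List.length_eq_zero_iff.mp; rw [hlen, hh]; rfl
    have hmi := minIdx_lt_length hne
    have hm' : minIdx L' = minIdx L := by
      apply minIdx_eq (by omega)
      · intro i hi
        have hi' : i < L.length := by omega
        by_contra hc
        push_neg at hc
        have : L[i] < L[minIdx L] := (hpat _ _ hi' hmi).mpr hc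
        exact absurd (minIdx_le hne hi') (not_le_of_gt this)
      · intro i hi
        intro hEq
        apply minIdx_first hne hi
        have h1 : ¬ L[i]'(lt_trans hi hmi) < L[minIdx L] := by
          rw [hpat _ _ (lt_trans hi hmi) hmi, hEq]; exact lt_irrefl _
        have h2 : ¬ L[minIdx L] < L[i]'(lt_trans hi hmi) := by
          rw [hpat _ _ hmi (lt_trans hi hmi), hEq]; exact lt_irrefl _
        exact _root_.le_antisymm (not_lt.mp h2) (not_lt.mp h1)
    rw [cart_unfold hne, cart_unfold hne', hm']
    have htlen : (L.take (minIdx L)).length = (L'.take (minIdx L)).length := by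
      simp [List.length_take]; omega
    have hdlen : (L.drop (minIdx L + 1)).length = (L'.drop (minIdx L + 1)).length := by
      simp [List.length_drop]; omega
    refine congrArg₂ BT.node ?_ ?_
    · apply ih _ _ (by simp [List.length_take]; omega) htlen
      intro i j hi hj
      simp only [List.getElem_take]
      exact hpat i j (by simp [List.length_take] at hi; omega)
        (by simp [List.length_take] at hj; omega)
    · apply ih _ _ (by simp [List.length_drop]; omega) hdlen
      intro i j hi hj
      simp only [List.getElem_drop]
      exact hpat _ _ (by simp [List.length_drop] at hi; omega)
        (by simp [List.length_drop] at hj; omega)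

end Helpers2
section Helpers3

open List

namespace BT

/-- inorder index of the k-th node of the right spine -/
def spineIdxR : BT → ℕ → ℕ
  | leaf, _ => 0
  | node l _, 0 => l.size
  | node l r, k+1 => l.size + 1 + spineIdxR r k

/-- inorder index of the k-th node of the left spine -/
def spineIdxL : BT → ℕ → ℕ
  | leaf, _ => 0
  | node l _, 0 => l.size
  | node l _, k+1 => spineIdxL l k

end BT

@[simp] lemma subtree_false (l r : BT) (p : List Bool) :
    (BT.node l r).subtree? (false :: p) = l.subtree? p := by simp [BT.subtree?]

@[simp] lemma subtree_true (l r : BT) (p : List Bool) :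
    (BT.node l r).subtree? (true :: p) = r.subtree? p := by simp [BT.subtree?]

lemma inList_length (t : BT) : t.inList.length = t.size := by
  induction t with
  | leaf => rfl
  | node l r ihl ihr => simp [BT.inList, BT.size, ihl, ihr]; omega

lemma getIn_left {l : BT} (r : BT) {i : ℕ} {q : List Bool} (h : l.inList[i]? = some q) :
    (BT.node l r).inList[i]? = some (false :: q) := by
  have hi : i < l.inList.length := by
    by_contra hc; push_neg at hc; rw [List.getElem?_eq_none hc] at h; simp at h
  simp only [BT.inList]
  rw [List.getElem?_append_left (by simp [List.length_map]; omega)]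
  rw [List.getElem?_map, h]
  rfl

lemma getIn_root (l r : BT) : (BT.node l r).inList[l.size]? = some [] := by
  simp only [BT.inList]
  rw [List.getElem?_append_right (by simp [List.length_map, inList_length])]
  simp [List.length_map, inList_length]

lemma getIn_right (l : BT) {r : BT} {i : ℕ} {q : List Bool} (h : r.inList[i]? = some q) :
    (BT.node l r).inList[l.size + 1 + i]? = some (true :: q) := by
  simp only [BT.inList]
  rw [List.getElem?_append_right (by simp [List.length_map, inList_length]; omega)]
  have : l.size + 1 + i - (l.inList.map (List.cons false)).length = i + 1 := by
    simp [List.length_map, inList_length]; omega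
  rw [this]
  simp only [List.getElem?_cons_succ]
  rw [List.getElem?_map, h]
  rfl

lemma in_bound {t : BT} {i : ℕ} {q : List Bool} (h : t.inList[i]? = some q) : i < t.size := by
  rw [← inList_length]
  by_contra hc; push_neg at hc; rw [List.getElem?_eq_none hc] at h; simp at h

lemma inv_left {l r : BT} {x : ℕ} {q : List Bool}
    (h : (BT.node l r).inList[x]? = some (false :: q)) :
    x < l.size ∧ l.inList[x]? = some q := by
  have hb := in_bound h
  simp only [BT.inList] at h
  rcases Nat.lt_or_ge x l.size with hx | hx
  · rw [List.getElem?_append_left (by simp [List.length_map, inList_length]; omega),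
      List.getElem?_map] at h
    refine ⟨hx, ?_⟩
    cases h' : l.inList[x]? with
    | none => rw [h'] at h; simp at h
    | some q' =>
      rw [h'] at h
      simp only [Option.map_some] at h
      injection h with h
      injection h with _ h
      rw [h]
  · exfalso
    rw [List.getElem?_append_right (by simp [List.length_map, inList_length]; omega)] at h
    rcases Nat.eq_or_lt_of_le hx with hEq | hlt
    · rw [show x - (l.inList.map (List.cons false)).length = 0 by
        simp [List.length_map, inList_length]; omega] at h
      simp at h
    · rw [show x - (l.inList.map (List.cons false)).length = (x - l.size - 1) + 1 by
        simp [List.length_map, inList_length]; omega] at h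
      simp only [List.getElem?_cons_succ, List.getElem?_map] at h
      cases h' : r.inList[x - l.size - 1]? with
      | none => rw [h'] at h; simp at h
      | some q' => rw [h'] at h; simp at h

lemma inv_root {l r : BT} {x : ℕ} (h : (BT.node l r).inList[x]? = some []) : x = l.size := by
  have hb := in_bound h
  simp only [BT.inList] at h
  rcases Nat.lt_or_ge x l.size with hx | hx
  · exfalso
    rw [List.getElem?_append_left (by simp [List.length_map, inList_length]; omega),
      List.getElem?_map] at h
    cases h' : l.inList[x]? with
    | none => rw [h'] at h; simp at h
    | some q' => rw [h'] at h; simp at h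
  · rcases Nat.eq_or_lt_of_le hx with hEq | hlt
    · omega
    · exfalso
      rw [List.getElem?_append_right (by simp [List.length_map, inList_length]; omega)] at h
      rw [show x - (l.inList.map (List.cons false)).length = (x - l.size - 1) + 1 by
        simp [List.length_map, inList_length]; omega] at h
      simp only [List.getElem?_cons_succ, List.getElem?_map] at h
      cases h' : r.inList[x - l.size - 1]? with
      | none => rw [h'] at h; simp at h
      | some q' => rw [h'] at h; simp at h

lemma inv_right {l r : BT} {x : ℕ} {q : List Bool}
    (h : (BT.node l r).inList[x]? = some (true :: q)) :
    l.size < x ∧ r.inList[x - l.size - 1]? = some q := by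
  have hb := in_bound h
  simp only [BT.inList] at h
  rcases Nat.lt_or_ge x l.size with hx | hx
  · exfalso
    rw [List.getElem?_append_left (by simp [List.length_map, inList_length]; omega),
      List.getElem?_map] at h
    cases h' : l.inList[x]? with
    | none => rw [h'] at h; simp at h
    | some q' => rw [h'] at h; simp at h
  · rw [List.getElem?_append_right (by simp [List.length_map, inList_length]; omega)] at h
    rcases Nat.eq_or_lt_of_le hx with hEq | hlt
    · exfalso
      rw [show x - (l.inList.map (List.cons false)).length = 0 by
        simp [List.length_map, inList_length]; omega] at h
      simp at h
    · refine ⟨hlt, ?_⟩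
      rw [show x - (l.inList.map (List.cons false)).length = (x - l.size - 1) + 1 by
        simp [List.length_map, inList_length]; omega] at h
      simp only [List.getElem?_cons_succ, List.getElem?_map] at h
      cases h' : r.inList[x - l.size - 1]? with
      | none => rw [h'] at h; simp at h
      | some q' =>
        rw [h'] at h
        simp only [Option.map_some] at h
        injection h with h
        injection h with _ h
        simp [h', h]

lemma inList_nodup (t : BT) : t.inList.Nodup := by
  induction t with
  | leaf => exact List.nodup_nil
  | node l r ihl ihr =>
    simp only [BT.inList]
    rw [List.nodup_append]
    refine ⟨ihl.map (fun a b h => by injection h), ?_, ?_⟩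
    · rw [List.nodup_cons]
      constructor
      · intro hmem
        rcases List.mem_map.mp hmem with ⟨q, _, hq⟩
        simp at hq
      · exact ihr.map (fun a b h => by injection h)
    · intro x hx y hy hxy
      subst hxy
      rcases List.mem_map.mp hx with ⟨q, _, rfl⟩
      rcases List.mem_cons.mp hy with h | h
      · simp at h
      · rcases List.mem_map.mp h with ⟨q', _, hq⟩
        simp at hq

lemma spineR_in : ∀ (t : BT) (k : ℕ), k < t.Rspine →
    t.inList[t.spineIdxR k]? = some (List.replicate k true) := by
  intro t
  induction t with
  | leaf => intro k hk; simp [BT.Rspine] at hk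
  | node l r _ ihr =>
    intro k hk
    cases k with
    | zero => exact getIn_root l r
    | succ k =>
      have hk' : k < r.Rspine := by simpa [BT.Rspine] using hk
      have := getIn_right l (ihr k hk')
      rw [show BT.spineIdxR (BT.node l r) (k+1) = l.size + 1 + r.spineIdxR k from rfl]
      rw [this]
      rfl

lemma spineL_in : ∀ (t : BT) (k : ℕ), k < t.Lspine →
    t.inList[t.spineIdxL k]? = some (List.replicate k false) := by
  intro t
  induction t with
  | leaf => intro k hk; simp [BT.Lspine] at hk
  | node l r ihl _ =>
    intro k hk
    cases k with
    | zero => exact getIn_root l r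
    | succ k =>
      have hk' : k < l.Lspine := by simpa [BT.Lspine] using hk
      have := getIn_left r (ihl k hk')
      rw [show BT.spineIdxL (BT.node l r) (k+1) = l.spineIdxL k from rfl]
      rw [this]
      rfl

lemma spineIdxR_lt {t : BT} {k : ℕ} (hk : k < t.Rspine) : t.spineIdxR k < t.size :=
  in_bound (spineR_in t k hk)

lemma spineIdxL_lt {t : BT} {k : ℕ} (hk : k < t.Lspine) : t.spineIdxL k < t.size :=
  in_bound (spineL_in t k hk)

end Helpers3
set_option linter.unusedSectionVars false
section Helpers4

open List

variable {α : Type*} [LinearOrder α]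

lemma getElem_Pv (P Q : List α) (v : α) :
    (P ++ v :: Q)[P.length]'(by simp) = v := by
  rw [List.getElem_append_right le_rfl]
  simp

lemma getElem_PQ (P Q : List α) (v : α) (i : ℕ) (hi : i < Q.length) :
    (P ++ v :: Q)[P.length + 1 + i]'(by simp; omega) = Q[i] := by
  rw [List.getElem_append_right (by omega)]
  have : P.length + 1 + i - P.length = i + 1 := by omega
  simp only [this, List.getElem_cons_succ]

lemma getElem_P (P Q : List α) (v : α) (i : ℕ) (hi : i < P.length) :
    (P ++ v :: Q)[i]'(by simp; omega) = P[i] :=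
  List.getElem_append_left hi

lemma heapR : ∀ (t : BT) (L : List α) (hc : cartesian L = t) (_hnd : L.Nodup)
    (j k : ℕ) (hjk : j < k) (hk : k < t.Rspine),
    L[t.spineIdxR j]'(by
      have h1 := size_cart' L; rw [hc] at h1
      have h2 := spineIdxR_lt (lt_trans hjk hk); omega) <
    L[t.spineIdxR k]'(by
      have h1 := size_cart' L; rw [hc] at h1
      have h2 := spineIdxR_lt hk; omega) := by
  intro t
  induction t with
  | leaf => intro L _ _ j k hjk hk; simp [BT.Rspine] at hk
  | node l r _ ihr =>
    intro L hc hnd j k hjk hk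
    obtain ⟨P, v, Q, hL, hP, hQ, hcP, hcQ, hmin, hlen⟩ := cart_decomp hc
    subst hL
    have hndQ : Q.Nodup := ((List.nodup_append.mp hnd).2.1).of_cons
    have hvQ : v ∉ Q := (List.nodup_cons.mp (List.nodup_append.mp hnd).2.1).1
    cases k with
    | zero => omega
    | succ k =>
      have hk' : k < r.Rspine := by simpa [BT.Rspine] using hk
      have hik : r.spineIdxR k < Q.length := by rw [hQ]; exact spineIdxR_lt hk'
      have hgk : ∀ (hh : BT.spineIdxR (BT.node l r) (k+1) < (P ++ v :: Q).length),
          (P ++ v :: Q)[BT.spineIdxR (BT.node l r) (k+1)]'hh = Q[r.spineIdxR k] := by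
        intro hh
        have : BT.spineIdxR (BT.node l r) (k+1) = P.length + 1 + r.spineIdxR k := by
          simp [BT.spineIdxR, hP]
        simp only [this]
        exact getElem_PQ P Q v _ hik
      cases j with
      | zero =>
        have hgj : ∀ (hh : BT.spineIdxR (BT.node l r) 0 < (P ++ v :: Q).length),
            (P ++ v :: Q)[BT.spineIdxR (BT.node l r) 0]'hh = v := by
          intro hh
          have : BT.spineIdxR (BT.node l r) 0 = P.length := by simp [BT.spineIdxR, hP]
          simp only [this]
          exact getElem_Pv P Q v
        rw [hgj, hgk]
        have hmem : Q[r.spineIdxR k] ∈ Q := List.getElem_mem _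
        have hle : v ≤ Q[r.spineIdxR k] :=
          hmin _ (List.mem_append_right _ (List.mem_cons_of_mem _ hmem))
        exact lt_of_le_of_ne hle (fun hEq => hvQ (hEq ▸ hmem))
      | succ j =>
        have hj' : j < k := by omega
        have hij : r.spineIdxR j < Q.length := by rw [hQ]; exact spineIdxR_lt (lt_trans hj' hk')
        have hgj : ∀ (hh : BT.spineIdxR (BT.node l r) (j+1) < (P ++ v :: Q).length),
            (P ++ v :: Q)[BT.spineIdxR (BT.node l r) (j+1)]'hh = Q[r.spineIdxR j] := by
          intro hh
          have : BT.spineIdxR (BT.node l r) (j+1) = P.length + 1 + r.spineIdxR j := by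
            simp [BT.spineIdxR, hP]
          simp only [this]
          exact getElem_PQ P Q v _ hij
        rw [hgj, hgk]
        exact ihr Q hcQ hndQ j k hj' hk'

lemma heapL : ∀ (t : BT) (L : List α) (hc : cartesian L = t) (_hnd : L.Nodup)
    (j k : ℕ) (hjk : j < k) (hk : k < t.Lspine),
    L[t.spineIdxL j]'(by
      have h1 := size_cart' L; rw [hc] at h1
      have h2 := spineIdxL_lt (lt_trans hjk hk); omega) <
    L[t.spineIdxL k]'(by
      have h1 := size_cart' L; rw [hc] at h1
      have h2 := spineIdxL_lt hk; omega) := by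
  intro t
  induction t with
  | leaf => intro L _ _ j k hjk hk; simp [BT.Lspine] at hk
  | node l r ihl _ =>
    intro L hc hnd j k hjk hk
    obtain ⟨P, v, Q, hL, hP, hQ, hcP, hcQ, hmin, hlen⟩ := cart_decomp hc
    subst hL
    have hndP : P.Nodup := (List.nodup_append.mp hnd).1
    have hvP : v ∉ P := by
      intro hv
      exact (List.nodup_append.mp hnd).2.2 v hv v List.mem_cons_self rfl
    cases k with
    | zero => omega
    | succ k =>
      have hk' : k < l.Lspine := by simpa [BT.Lspine] using hk
      have hik : l.spineIdxL k < P.length := by rw [hP]; exact spineIdxL_lt hk'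
      have hgk : ∀ (hh : BT.spineIdxL (BT.node l r) (k+1) < (P ++ v :: Q).length),
          (P ++ v :: Q)[BT.spineIdxL (BT.node l r) (k+1)]'hh = P[l.spineIdxL k] := by
        intro hh
        have : BT.spineIdxL (BT.node l r) (k+1) = l.spineIdxL k := rfl
        simp only [this]
        exact getElem_P P Q v _ hik
      cases j with
      | zero =>
        have hgj : ∀ (hh : BT.spineIdxL (BT.node l r) 0 < (P ++ v :: Q).length),
            (P ++ v :: Q)[BT.spineIdxL (BT.node l r) 0]'hh = v := by
          intro hh
          have : BT.spineIdxL (BT.node l r) 0 = P.length := by simp [BT.spineIdxL, hP]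
          simp only [this]
          exact getElem_Pv P Q v
        rw [hgj, hgk]
        have hmem : P[l.spineIdxL k] ∈ P := List.getElem_mem _
        have hle : v ≤ P[l.spineIdxL k] := hmin _ (List.mem_append_left _ hmem)
        exact lt_of_le_of_ne hle (fun hEq => hvP (hEq ▸ hmem))
      | succ j =>
        have hj' : j < k := by omega
        have hij : l.spineIdxL j < P.length := by rw [hP]; exact spineIdxL_lt (lt_trans hj' hk')
        have hgj : ∀ (hh : BT.spineIdxL (BT.node l r) (j+1) < (P ++ v :: Q).length),
            (P ++ v :: Q)[BT.spineIdxL (BT.node l r) (j+1)]'hh = P[l.spineIdxL j] := by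
          intro hh
          have : BT.spineIdxL (BT.node l r) (j+1) = l.spineIdxL j := rfl
          simp only [this]
          exact getElem_P P Q v _ hij
        rw [hgj, hgk]
        exact ihl P hcP hndP j k hj' hk'

end Helpers4
section Helpers5

open List

/-- positions of `b` in `w` -/
def posList (w : List Bool) (b : Bool) : List ℕ :=
  (List.range w.length).filter fun i => w.getD i (!b) = b

lemma nthIdx_eq_posList (w : List Bool) (b : Bool) (k : ℕ) :
    nthIdx w b k = (posList w b).getD k w.length := rfl

lemma posList_length (w : List Bool) (b : Bool) : (posList w b).length = w.count b := by
  induction w using List.reverseRecOn with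
  | nil => simp [posList]
  | append_singleton w x ih =>
    simp only [posList, List.length_append, List.length_singleton, List.range_succ,
      List.filter_append, List.length_append]
    have h1 : (List.range w.length).filter (fun i => (w ++ [x]).getD i (!b) = b)
        = (List.range w.length).filter (fun i => w.getD i (!b) = b) := by
      apply List.filter_congr
      intro i hi
      have hi' : i < w.length := List.mem_range.mp hi
      rw [List.getD_append _ _ _ _ hi']
    have h2 : (w ++ [x]).getD w.length (!b) = x := by
      rw [List.getD_append_right _ _ _ _ le_rfl]
      simp
    rw [h1]
    simp only [List.filter_cons, List.filter_nil, h2]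
    rw [List.count_append]
    by_cases hx : x = b
    · simp [hx, posList, List.count_cons] at ih ⊢; omega
    · have hxb : (x == b) = false := by simp [hx]
      simp [hx, hxb, posList, List.count_cons] at ih ⊢; omega

lemma posList_pairwise (w : List Bool) (b : Bool) : (posList w b).Pairwise (· < ·) :=
  List.Pairwise.sublist List.filter_sublist List.pairwise_lt_range

lemma posList_mem {w : List Bool} {b : Bool} {i : ℕ} (h : i ∈ posList w b) :
    i < w.length ∧ w.getD i (!b) = b := by
  have := List.mem_filter.mp h
  exact ⟨List.mem_range.mp this.1, by simpa using this.2⟩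

lemma nthIdx_lt {w : List Bool} {b : Bool} {k : ℕ} (hk : k < w.count b) :
    nthIdx w b k < w.length ∧ w.getD (nthIdx w b k) (!b) = b := by
  have hk' : k < (posList w b).length := by rw [posList_length]; exact hk
  rw [nthIdx_eq_posList, List.getD_eq_getElem _ _ hk']
  exact posList_mem (List.getElem_mem _)

lemma nthIdx_mono {w : List Bool} {b : Bool} {j k : ℕ} (hjk : j < k) (hk : k < w.count b) :
    nthIdx w b j < nthIdx w b k := by
  have hk' : k < (posList w b).length := by rw [posList_length]; exact hk
  have hj' : j < (posList w b).length := by omega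
  rw [nthIdx_eq_posList, nthIdx_eq_posList, List.getD_eq_getElem _ _ hk',
    List.getD_eq_getElem _ _ hj']
  exact List.pairwise_iff_getElem.mp (posList_pairwise w b) _ _ _ _ hjk

lemma nthIdx_ne {w : List Bool} {k k' : ℕ} (hk : k < w.count false) (hk' : k' < w.count true) :
    nthIdx w false k ≠ nthIdx w true k' := by
  intro hEq
  have h1 := nthIdx_lt hk
  have h2 := nthIdx_lt hk'
  rw [hEq] at h1
  rw [List.getD_eq_getElem _ _ h2.1] at h1 h2
  rw [h1.2] at h2
  exact Bool.noConfusion h2.2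

lemma count_false_add_true (w : List Bool) : w.count false + w.count true = w.length := by
  induction w with
  | nil => simp
  | cons x xs ih =>
    cases x <;> simp [List.count_cons] <;> omega

/-- strictly monotone extension through finitely many prescribed points -/
lemma monoExt : ∀ (m : ℕ) (s c : ℕ → ℝ), (∀ j k, j < k → k < m → s j < s k) →
    (∀ j k, j < k → k < m → c j < c k) →
    ∃ φ : ℝ → ℝ, StrictMono φ ∧ ∀ k, k < m → φ (s k) = c k := by
  intro m
  induction m with
  | zero => exact fun s c _ _ => ⟨id, strictMono_id, fun k hk => absurd hk (by omega)⟩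
  | succ m ih =>
    intro s c hs hc
    rcases Nat.eq_zero_or_pos m with rfl | hm
    · refine ⟨fun x => x + (c 0 - s 0), fun a b hab => by simpa using hab, ?_⟩
      intro k hk
      interval_cases k
      ring
    · obtain ⟨φ, hφ, hφs⟩ := ih s c (fun j k hj hk => hs j k hj (by omega))
        (fun j k hj hk => hc j k hj (by omega))
      set a := c (m - 1) with ha
      set t := φ (s m) with htdef
      have hat : a < t := by
        have h1 : s (m-1) < s m := hs _ _ (by omega) (by omega)
        have h2 := hφ h1
        rw [hφs (m-1) (by omega)] at h2
        exact h2
      have hac : a < c m := hc (m-1) m (by omega) (by omega)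
      set lam := (c m - a) / (t - a) with hlamdef
      have hlam : 0 < lam := div_pos (by linarith) (by linarith)
      set g : ℝ → ℝ := fun x => if x ≤ a then x else a + (x - a) * lam with hg
      have hgmono : StrictMono g := by
        intro x y hxy
        simp only [hg]
        by_cases hx : x ≤ a <;> by_cases hy : y ≤ a
        · simpa [hx, hy] using hxy
        · simp only [if_pos hx, if_neg hy]
          push_neg at hy
          nlinarith [mul_pos (sub_pos.mpr hy) hlam]
        · push_neg at hx; linarith
        · simp only [if_neg hx, if_neg hy]
          push_neg at hx hy
          nlinarith [mul_lt_mul_of_pos_right (sub_lt_sub_right hxy a) hlam]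
      refine ⟨g ∘ φ, hgmono.comp hφ, ?_⟩
      intro k hk
      rcases Nat.lt_or_ge k m with hk' | hk'
      · rw [Function.comp_apply, hφs k hk']
        have hck : c k ≤ a := by
          rcases Nat.lt_or_ge k (m-1) with h | h
          · exact le_of_lt (hc k (m-1) h (by omega))
          · have : k = m - 1 := by omega
            rw [this]
        simp only [hg, if_pos hck]
      · have hkm : k = m := by omega
        subst hkm
        rw [Function.comp_apply]
        show g t = c k
        have hta : ¬ t ≤ a := not_le_of_gt hat
        simp only [hg, if_neg hta, hlamdef]
        rw [mul_comm, div_mul_cancel₀ _ (sub_ne_zero.mpr (ne_of_gt hat))]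
        ring
  
end Helpers5
section Helpers6

open List

/-- list version of `realizes` -/
def ListRealizes (t : BT) (M : List Bool → List Bool) (L : List ℝ) : Prop :=
  cartesian L = t ∧
  ∀ p l r, t.subtree? p = some (.node l r) → l ≠ .leaf → r ≠ .leaf →
    ∀ k k', k < l.Rspine → k' < r.Lspine →
    ∀ x y : ℕ, x < L.length → y < L.length →
      t.inList[x]? = some (p ++ false :: List.replicate k true) →
      t.inList[y]? = some (p ++ true :: List.replicate k' false) →
      (L.getD x 0 < L.getD y 0 ↔ nthIdx (M p) false k < nthIdx (M p) true k')

lemma foldr_min_le (L : List ℝ) (a : ℝ) : ∀ x ∈ L, L.foldr min a ≤ x := by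
  induction L with
  | nil => intro x hx; simp at hx
  | cons y ys ih =>
    intro x hx
    rcases List.mem_cons.mp hx with rfl | hx
    · exact min_le_left _ _
    · exact le_trans (min_le_right _ _) (ih x hx)

lemma getD_map (f : ℝ → ℝ) (L : List ℝ) (i : ℕ) (h : i < L.length) :
    (L.map f).getD i 0 = f (L.getD i 0) := by
  rw [List.getD_eq_getElem _ _ (by simpa using h), List.getElem_map,
    List.getD_eq_getElem _ _ h]

lemma cart_map_mono {f : ℝ → ℝ} (hf : StrictMono f) (L : List ℝ) :
    cartesian (L.map f) = cartesian L := by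
  apply cart_congr (L.map f).length _ _ le_rfl (by simp)
  intro i j hi hj
  simp only [List.getElem_map]
  exact hf.lt_iff_lt

lemma main_exists : ∀ (t : BT) (M : List Bool → List Bool), validMerge t M →
    ∃ L : List ℝ, L.length = t.size ∧ L.Nodup ∧ ListRealizes t M L := by
  intro t
  induction t with
  | leaf =>
    intro M _
    refine ⟨[], rfl, List.nodup_nil, cart_nil, ?_⟩
    intro p l r h
    exfalso
    cases p with
    | nil => simp [BT.subtree?] at h
    | cons b p => simp [BT.subtree?] at h
  | node l r ihl ihr =>
    intro M hM
    have hMl : validMerge l (fun q => M (false :: q)) := by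
      intro p l' r' h hl hr
      exact hM (false :: p) l' r' (by simpa using h) hl hr
    have hMr : validMerge r (fun q => M (true :: q)) := by
      intro p l' r' h hl hr
      exact hM (true :: p) l' r' (by simpa using h) hl hr
    obtain ⟨L₁, hlen1, hnd1, hc1, hmc1⟩ := ihl _ hMl
    obtain ⟨L₂, hlen2, hnd2, hc2, hmc2⟩ := ihr _ hMr
    set s : ℕ → ℝ := fun k => L₁.getD (l.spineIdxR k) 0 with hsdef
    set u : ℕ → ℝ := fun k => L₂.getD (r.spineIdxL k) 0 with hudef
    have hs : ∀ j k, j < k → k < l.Rspine → s j < s k := by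
      intro j k hjk hk
      have h := heapR l L₁ hc1 hnd1 j k hjk hk
      have b1 : l.spineIdxR j < L₁.length := by rw [hlen1]; exact spineIdxR_lt (lt_trans hjk hk)
      have b2 : l.spineIdxR k < L₁.length := by rw [hlen1]; exact spineIdxR_lt hk
      have e1 : s j = L₁[l.spineIdxR j]'b1 := List.getD_eq_getElem _ _ b1
      have e2 : s k = L₁[l.spineIdxR k]'b2 := List.getD_eq_getElem _ _ b2
      rw [e1, e2]; exact h
    have hu : ∀ j k, j < k → k < r.Lspine → u j < u k := by
      intro j k hjk hk
      have h := heapL r L₂ hc2 hnd2 j k hjk hk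
      have b1 : r.spineIdxL j < L₂.length := by rw [hlen2]; exact spineIdxL_lt (lt_trans hjk hk)
      have b2 : r.spineIdxL k < L₂.length := by rw [hlen2]; exact spineIdxL_lt hk
      have e1 : u j = L₂[r.spineIdxL j]'b1 := List.getD_eq_getElem _ _ b1
      have e2 : u k = L₂[r.spineIdxL k]'b2 := List.getD_eq_getElem _ _ b2
      rw [e1, e2]; exact h
    have hwcount : l ≠ BT.leaf → r ≠ BT.leaf →
        (M []).count false = l.Rspine ∧ (M []).count true = r.Lspine := by
      intro hl hr
      have hw := hM [] l r rfl hl hr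
      have := count_false_add_true (M [])
      omega
    obtain ⟨φ, hφ, hφs⟩ : ∃ φ : ℝ → ℝ, StrictMono φ ∧
        (l ≠ BT.leaf → r ≠ BT.leaf → ∀ k, k < l.Rspine →
          φ (s k) = (nthIdx (M []) false k : ℝ)) := by
      by_cases hl : l = BT.leaf
      · exact ⟨id, strictMono_id, fun h => absurd hl h⟩
      by_cases hr : r = BT.leaf
      · exact ⟨id, strictMono_id, fun _ h => absurd hr h⟩
      · obtain ⟨φ, h1, h2⟩ := monoExt l.Rspine s (fun k => (nthIdx (M []) false k : ℝ)) hs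
          (fun j k hj hk => Nat.cast_lt.mpr (nthIdx_mono hj ((hwcount hl hr).1 ▸ hk)))
        exact ⟨φ, h1, fun _ _ => h2⟩
    obtain ⟨ψ, hψ, hψs⟩ : ∃ ψ : ℝ → ℝ, StrictMono ψ ∧
        (l ≠ BT.leaf → r ≠ BT.leaf → ∀ k, k < r.Lspine →
          ψ (u k) = (nthIdx (M []) true k : ℝ)) := by
      by_cases hl : l = BT.leaf
      · exact ⟨id, strictMono_id, fun h => absurd hl h⟩
      by_cases hr : r = BT.leaf
      · exact ⟨id, strictMono_id, fun _ h => absurd hr h⟩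
      · obtain ⟨ψ, h1, h2⟩ := monoExt r.Lspine u (fun k => (nthIdx (M []) true k : ℝ)) hu
          (fun j k hj hk => Nat.cast_lt.mpr (nthIdx_mono hj ((hwcount hl hr).2 ▸ hk)))
        exact ⟨ψ, h1, fun _ _ => h2⟩
    obtain ⟨δ, hδmem, hδ⟩ := (Set.Ioo_infinite (by norm_num : (0:ℝ) < 1)).exists_notMem_finset
      ((L₁.toFinset ×ˢ L₂.toFinset).image fun q => φ q.1 - ψ q.2)
    have hδ0 : (0:ℝ) < δ := hδmem.1
    have hδ1 : δ < 1 := hδmem.2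
    have hcross : ∀ a ∈ L₁, ∀ b ∈ L₂, φ a ≠ ψ b + δ := by
      intro a ha b hb hEq
      apply hδ
      refine Finset.mem_image.mpr ⟨(a, b), ?_, by linarith⟩
      exact Finset.mem_product.mpr ⟨List.mem_toFinset.mpr ha, List.mem_toFinset.mpr hb⟩
    set ψδ : ℝ → ℝ := fun x => ψ x + δ with hψδdef
    have hψδ : StrictMono ψδ := fun a b hab => by
      simp only [hψδdef]; exact add_lt_add_left (hψ hab) δ
    set B₁ := L₁.map φ with hB1def
    set B₂ := L₂.map ψδ with hB2def
    set ρ : ℝ := (B₁ ++ B₂).foldr min 0 - 1 with hρdef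
    have hρ : ∀ x ∈ B₁ ++ B₂, ρ < x := by
      intro x hx
      have := foldr_min_le (B₁ ++ B₂) 0 x hx
      rw [hρdef]; linarith
    set LL := B₁ ++ ρ :: B₂ with hLLdef
    have hB1len : B₁.length = l.size := by simp [hB1def, hlen1]
    have hB2len : B₂.length = r.size := by simp [hB2def, hlen2]
    have hLLlen : LL.length = (BT.node l r).size := by
      simp [hLLdef, hB1len, hB2len, BT.size]; omega
    -- value extraction
    have val_left : ∀ i, i < L₁.length → LL.getD i 0 = φ (L₁.getD i 0) := by
      intro i hi
      rw [hLLdef, List.getD_append _ _ _ _ (by simpa [hB1def] using hi)]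
      exact getD_map φ L₁ i hi
    have val_right : ∀ i, i < L₂.length → LL.getD (l.size + 1 + i) 0 = ψ (L₂.getD i 0) + δ := by
      intro i hi
      rw [hLLdef, List.getD_append_right _ _ _ _ (by rw [hB1len]; omega)]
      rw [show l.size + 1 + i - B₁.length = i + 1 by rw [hB1len]; omega]
      rw [List.getD_cons_succ]
      exact getD_map ψδ L₂ i hi
    have hcart : cartesian LL = BT.node l r := by
      rw [hLLdef, cart_append B₁ B₂ ρ hρ, cart_map_mono hφ, cart_map_mono hψδ, hc1, hc2]
    refine ⟨LL, hLLlen, ?_, hcart, ?_⟩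
    · -- Nodup
      rw [hLLdef, List.nodup_append]
      refine ⟨hnd1.map hφ.injective, ?_, ?_⟩
      · rw [List.nodup_cons]
        constructor
        · intro hmem
          exact absurd rfl (ne_of_lt (hρ _ (List.mem_append_right _ hmem)))
        · exact hnd2.map hψδ.injective
      · intro x hx y hy hxy
        subst hxy
        rcases List.mem_cons.mp hy with rfl | hy
        · exact absurd rfl (ne_of_lt (hρ _ (List.mem_append_left _ hx)))
        · rcases List.mem_map.mp hx with ⟨a, ha, rfl⟩
          rcases List.mem_map.mp hy with ⟨b, hb, hEq⟩
          exact hcross a ha b hb hEq.symm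
    · -- merge clauses
      intro p l' r' hsub hl' hr' k k' hk hk' x y hx hy hxin hyin
      cases p with
      | nil =>
        rw [show (BT.node l r).subtree? [] = some (BT.node l r) from rfl] at hsub
        injection hsub with hinj
        injection hinj with h1 h2
        subst h1
        subst h2
        simp only [List.nil_append] at hxin hyin
        obtain ⟨hxl, hxin'⟩ := inv_left hxin
        obtain ⟨hyl, hyin'⟩ := inv_right hyin
        have hxeq : x = l.spineIdxR k := by
          apply (List.getElem?_inj (by rw [inList_length]; exact hxl) (inList_nodup l)).mp
          rw [hxin', spineR_in l k hk]
        have hyb2 : y - l.size - 1 < r.inList.length := by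
          rw [inList_length]; exact in_bound hyin'
        have hyeq : y - l.size - 1 = r.spineIdxL k' := by
          apply (List.getElem?_inj hyb2 (inList_nodup r)).mp
          rw [hyin', spineL_in r k' hk']
        have hvx : LL.getD x 0 = (nthIdx (M []) false k : ℝ) := by
          rw [val_left x (by rw [hlen1]; exact hxl), hxeq]
          exact hφs hl' hr' k hk
        have hvy : LL.getD y 0 = (nthIdx (M []) true k' : ℝ) + δ := by
          have hyrange : y = l.size + 1 + (y - l.size - 1) := by omega
          rw [hyrange, val_right _ (by rw [hlen2]; exact in_bound hyin'), hyeq]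
          rw [hψs hl' hr' k' hk']
        rw [hvx, hvy]
        have hcnt := hwcount hl' hr'
        have hne := nthIdx_ne (w := M []) (hcnt.1 ▸ hk) (hcnt.2 ▸ hk')
        constructor
        · intro h
          by_contra hcon
          push_neg at hcon
          have : nthIdx (M []) true k' < nthIdx (M []) false k := lt_of_le_of_ne hcon (fun hh => hne hh.symm)
          have : (nthIdx (M []) true k' : ℝ) + 1 ≤ (nthIdx (M []) false k : ℝ) := by
            exact_mod_cast Nat.succ_le_of_lt this
          linarith
        · intro h
          have : (nthIdx (M []) false k : ℝ) < (nthIdx (M []) true k' : ℝ) := Nat.cast_lt.mpr h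
          linarith
      | cons b p' =>
        cases b with
        | false =>
          rw [subtree_false] at hsub
          simp only [List.cons_append] at hxin hyin
          obtain ⟨hxl, hxin'⟩ := inv_left hxin
          obtain ⟨hyl, hyin'⟩ := inv_left hyin
          rw [val_left x (by rw [hlen1]; exact hxl), val_left y (by rw [hlen1]; exact hyl)]
          rw [hφ.lt_iff_lt]
          exact hmc1 p' l' r' hsub hl' hr' k k' hk hk' x y (by rw [hlen1]; exact hxl)
            (by rw [hlen1]; exact hyl) hxin' hyin'
        | true =>
          rw [subtree_true] at hsub
          simp only [List.cons_append] at hxin hyin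
          obtain ⟨hxl, hxin'⟩ := inv_right hxin
          obtain ⟨hyl, hyin'⟩ := inv_right hyin
          have hxb : x - l.size - 1 < L₂.length := by
            rw [hlen2]; exact (in_bound hxin').trans_le (le_of_eq rfl)
          have hyb : y - l.size - 1 < L₂.length := by
            rw [hlen2]; exact (in_bound hyin').trans_le (le_of_eq rfl)
          have hxr : x = l.size + 1 + (x - l.size - 1) := by omega
          have hyr : y = l.size + 1 + (y - l.size - 1) := by omega
          rw [hxr, val_right _ hxb, hyr, val_right _ hyb]
          rw [add_lt_add_iff_right, hψ.lt_iff_lt]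
          exact hmc2 p' l' r' hsub hl' hr' k k' hk hk' _ _ hxb hyb hxin' hyin'

end Helpers6
section Helpers7

open List

lemma stmt16_aux (t : BT) (M : List Bool → List Bool) (hM : validMerge t M) :
    ∃ σ : Equiv.Perm (Fin t.size), realizes (fun i => σ i) t M := by
  obtain ⟨L, hLlen, hLnd, hLc, hLm⟩ := main_exists t M hM
  set A : Fin t.size → ℝ := fun i => L.getD i 0 with hAdef
  have hgetA : ∀ (i : Fin t.size), A i = L[(i:ℕ)]'(by rw [hLlen]; exact i.isLt) := by
    intro i
    exact List.getD_eq_getElem _ _ _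
  have hAinj : Function.Injective A := by
    intro i j hij
    rw [hgetA, hgetA] at hij
    have : ((i:ℕ) : ℕ) = (j:ℕ) := by
      apply (List.getElem?_inj (by rw [hLlen]; exact i.isLt) hLnd).mp
      rw [List.getElem?_eq_getElem (by rw [hLlen]; exact i.isLt),
        List.getElem?_eq_getElem (by rw [hLlen]; exact j.isLt)]
      exact congrArg some hij
    exact Fin.ext this
  set S : Finset ℝ := Finset.image A Finset.univ with hSdef
  have hcard : S.card = t.size := by
    rw [hSdef, Finset.card_image_of_injective _ hAinj, Finset.card_univ, Fintype.card_fin]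
  set e := S.orderIsoOfFin hcard with hedef
  set σ₀ : Fin t.size → Fin t.size :=
    fun i => e.symm ⟨A i, Finset.mem_image_of_mem _ (Finset.mem_univ i)⟩ with hσdef
  have hmono : ∀ i j, σ₀ i < σ₀ j ↔ A i < A j := by
    intro i j
    rw [hσdef]
    rw [OrderIso.lt_iff_lt]
    exact Subtype.mk_lt_mk
  have hinj : Function.Injective σ₀ := by
    intro i j hij
    apply hAinj
    have := e.symm.injective hij
    exact congrArg Subtype.val this
  have hbij : Function.Bijective σ₀ := Finite.injective_iff_bijective.mp hinj
  refine ⟨Equiv.ofBijective σ₀ hbij, ?_, ?_⟩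
  · -- cartesian
    have h1 : cartesian (List.ofFn fun i => (Equiv.ofBijective σ₀ hbij) i) = cartesian L := by
      apply cart_congr (List.ofFn fun i => (Equiv.ofBijective σ₀ hbij) i).length _ _ le_rfl
        (by simp [hLlen])
      intro i j hi hj
      have hi' : i < t.size := by simpa using hi
      have hj' : j < t.size := by simpa using hj
      rw [List.getElem_ofFn, List.getElem_ofFn]
      show σ₀ _ < σ₀ _ ↔ _
      rw [hmono ⟨i, hi'⟩ ⟨j, hj'⟩, hgetA, hgetA]
    rw [h1, hLc]
  · -- merge clauses
    intro p l r hsub hl hr k k' hk hk' x y hxin hyin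
    show σ₀ x < σ₀ y ↔ _
    rw [hmono x y, hgetA, hgetA]
    have hx : (x:ℕ) < L.length := by rw [hLlen]; exact x.isLt
    have hy : (y:ℕ) < L.length := by rw [hLlen]; exact y.isLt
    rw [← List.getD_eq_getElem L 0 hx, ← List.getD_eq_getElem L 0 hy]
    exact hLm p l r hsub hl hr k k' hk hk' x y hx hy hxin hyin

end Helpers7
/-- Every extended Cartesian tree `(t, M)` on `n` nodes is realized by some permutation
of `{1,…,n}`: its Cartesian tree is `t` and the relative order of the values on the two
inner spines of every two-child node agrees with the interleaving `M`. -/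
theorem stmt16 (n : ℕ) (t : BT) (ht : t.size = n) (M : List Bool → List Bool)
    (hM : validMerge t M) :
    ∃ σ : Equiv.Perm (Fin n), realizes (fun i => σ i) t M := by
  subst ht
  exact stmt16_aux t M hM
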